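/- For every d ≥ 1 the following identity holds in 𝔽_{q²}(t): L_{2d+1}/L_{2d}^q = [1]^{1−q}·[2]·((t − ζ^q)/(t − ζ))^{q−1}·α_d^{q−1}·β_{d−1}^q·β_d^{−1}, where α_d = ∏_{j=2}^{d} (1 − [2(j−1)]/[2j]) and β_d = ∏_{j=1}^{d} (1 − [2j−1]/[2j+1]) (empty products equal 1, β_0 = 1). -/

import Mathlib

private lemma fac_key {K : Type*} [Field K] (c A x y : K)
    (hc : c ≠ 0) (hx : x ≠ 0) (hy : y ≠ 0) (hne : c - y ≠ 0)
    (h5 : x - y = x * A) :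
    1 - ((c - x) / (x * c)) / ((c - y) / (y * c)) = c * A / (c - y) := by
  field_simp
  linear_combination c * h5

private lemma base_rhs {K : Type*} [Field K] (q : ℕ) (n c m d u v p e : K)
    (hn : n ≠ 0) (hc : c ≠ 0) (hd : d ≠ 0) (hu : u ≠ 0) (hv : v ≠ 0) (hp : p ≠ 0) (he : e ≠ 0) :
    n/c/(n/c)^q * (m/d) * ((u/v)^q * (u/v)⁻¹) * (p/e)⁻¹
      = (n * c^q * m * u^q * v * e) / (c * n^q * d * v^q * u * p) := by
  field_simp
  have h1 : v^q * v⁻¹^q = 1 := by rw [inv_pow, mul_inv_cancel₀ (pow_ne_zero _ hv)]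
  have h2 : c^q * c⁻¹^q = 1 := by rw [inv_pow, mul_inv_cancel₀ (pow_ne_zero _ hc)]
  linear_combination (m*u^q*n^q) * h1 - (m*u^q*n^q) * h2

open Finset in
private lemma abstract_key {K : Type*} [Field K] (q : ℕ) (hq2 : 2 ≤ q)
    (a b A : K) (N : ℕ → K) (L : ℕ → K) (br : ℕ → K)
    (ha : a ≠ 0) (hb : b ≠ 0) (hA : A ≠ 0) (hN : ∀ k, N (k+1) ≠ 0)
    (hNA : N 2 = a * A)
    (hfrob : ∀ k, a ^ q ^ k - a ^ q ^ (k+2) = (a*A) ^ q ^ k)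
    (hNa : ∀ k, N (2*k) = a - a ^ q ^ (2*k))
    (hNb : ∀ k, N (2*k+1) = b - a ^ q ^ (2*k+1))
    (hbre : ∀ k, br (2*k) = N (2*k) / (a ^ q ^ (2*k) * a))
    (hbro : ∀ k, br (2*k+1) = N (2*k+1) / (a ^ q ^ (2*k+1) * b))
    (hL0 : L 0 = 1)
    (hLo : ∀ k, L (2*k+1) = L (2*k) * N (2*k+1) / (b * b ^ (q^(2*k+1) - q^(2*k)) * a ^ q^(2*k)))
    (hLe : ∀ k, L (2*k+2) = L (2*k+1) * N (2*k+2) / (a * b ^ (q^(2*k+2) - q^(2*k+1)) * a ^ q^(2*k+1)))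
    (d : ℕ) (hd : 1 ≤ d) :
    L (2*d+1) / L (2*d) ^ q = br 1 ^ ((1:ℤ) - (q:ℤ)) * br 2 * (a/b)^(q-1) *
      (∏ j ∈ Finset.Icc 2 d, (1 - br (2*(j-1))/br (2*j)))^(q-1) *
      (∏ j ∈ Finset.Icc 1 (d-1), (1 - br (2*j-1)/br (2*j+1)))^q *
      (∏ j ∈ Finset.Icc 1 d, (1 - br (2*j-1)/br (2*j+1)))⁻¹ := by
  have hple : ∀ m n : ℕ, m ≤ n → q ^ m ≤ q ^ n := fun m n h => Nat.pow_le_pow_right (by omega) h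
  have hNne : ∀ m, m ≠ 0 → N m ≠ 0 := fun m hm => by
    obtain ⟨l, rfl⟩ := Nat.exists_eq_succ_of_ne_zero hm; exact hN l
  -- nonvanishing of L
  have hLne : ∀ k, L (2*k) ≠ 0 ∧ L (2*k+1) ≠ 0 := by
    intro k
    induction k with
    | zero =>
      constructor
      · rw [show 2*0 = 0 by ring, hL0]; exact one_ne_zero
      · rw [hLo 0]
        exact div_ne_zero (mul_ne_zero (by rw [show 2*0 = 0 by ring, hL0]; exact one_ne_zero)
            (hNne _ (by omega)))
          (mul_ne_zero (mul_ne_zero hb (pow_ne_zero _ hb)) (pow_ne_zero _ ha))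
    | succ k ih =>
      have h2 : L (2*(k+1)) ≠ 0 := by
        rw [show 2*(k+1) = 2*k+2 by ring, hLe k]
        exact div_ne_zero (mul_ne_zero ih.2 (hNne _ (by omega)))
          (mul_ne_zero (mul_ne_zero ha (pow_ne_zero _ hb)) (pow_ne_zero _ ha))
      refine ⟨h2, ?_⟩
      rw [hLo (k+1)]
      exact div_ne_zero (mul_ne_zero h2 (hNne _ (by omega)))
        (mul_ne_zero (mul_ne_zero hb (pow_ne_zero _ hb)) (pow_ne_zero _ ha))
  -- nonvanishing of br at odd indices
  have hbrOdd : ∀ k, br (2*k+1) ≠ 0 := by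
    intro k
    rw [hbro k]
    exact div_ne_zero (hNne _ (by omega)) (mul_ne_zero (pow_ne_zero _ ha) hb)
  -- alpha factor
  have halpha : ∀ k, 1 - br (2*k) / br (2*k+2) = a * A ^ q ^ (2*k) / N (2*k+2) := by
    intro k
    have h2 : br (2*k+2) = N (2*k+2) / (a ^ q ^ (2*k+2) * a) := by
      have := hbre (k+1); rwa [show 2*(k+1) = 2*k+2 by ring] at this
    have h4 : N (2*k+2) = a - a ^ q ^ (2*k+2) := by
      have := hNa (k+1); rwa [show 2*(k+1) = 2*k+2 by ring] at this
    have h5 : a ^ q ^ (2*k) - a ^ q ^ (2*k+2) = a ^ q ^ (2*k) * A ^ q ^ (2*k) := by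
      have := hfrob (2*k); rwa [mul_pow] at this
    have hNne2 : N (2*k+2) ≠ 0 := hNne _ (by omega)
    rw [h4] at hNne2
    rw [hbre k, h2, hNa k, h4]
    exact fac_key a (A ^ q ^ (2*k)) _ _ ha (pow_ne_zero _ ha) (pow_ne_zero _ ha) hNne2 h5
  -- beta factor
  have hbeta : ∀ k, 1 - br (2*k+1) / br (2*k+3) = b * A ^ q ^ (2*k+1) / N (2*k+3) := by
    intro k
    have h2 : br (2*k+3) = N (2*k+3) / (a ^ q ^ (2*k+3) * b) := by
      have := hbro (k+1); rwa [show 2*(k+1)+1 = 2*k+3 by ring] at this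
    have h4 : N (2*k+3) = b - a ^ q ^ (2*k+3) := by
      have := hNb (k+1); rwa [show 2*(k+1)+1 = 2*k+3 by ring] at this
    have h5 : a ^ q ^ (2*k+1) - a ^ q ^ (2*k+3) = a ^ q ^ (2*k+1) * A ^ q ^ (2*k+1) := by
      have := hfrob (2*k+1)
      rwa [mul_pow, show 2*k+1+2 = 2*k+3 by ring] at this
    have hNne2 : N (2*k+3) ≠ 0 := hNne _ (by omega)
    rw [h4] at hNne2
    rw [hbro k, h2, hNb k, h4]
    exact fac_key b (A ^ q ^ (2*k+1)) _ _ hb (pow_ne_zero _ ha) (pow_ne_zero _ ha) hNne2 h5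
  -- step identity for the left-hand side
  have hstep : ∀ k, L (2*k+3) / L (2*k+2)^q = L (2*k+1) / L (2*k)^q *
      ((N (2*k+1)^q)⁻¹ * (N (2*k+2) * (N (2*k+2)^q)⁻¹) * N (2*k+3) * ((a*b)^q * (a*b)⁻¹)) := by
    intro k
    have hY1 : b ^ (q^(2*k+1) - q^(2*k)) * b ^ (q^(2*k)) = b ^ (q^(2*k+1)) :=
      pow_sub_mul_pow b (hple _ _ (by omega))
    have hY2 : b ^ (q^(2*k+2) - q^(2*k+1)) * b ^ (q^(2*k+1)) = b ^ (q^(2*k+2)) :=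
      pow_sub_mul_pow b (hple _ _ (by omega))
    have hY3 : b ^ (q^(2*k+3) - q^(2*k+2)) * b ^ (q^(2*k+2)) = b ^ (q^(2*k+3)) :=
      pow_sub_mul_pow b (hple _ _ (by omega))
    have M1 : L (2*k+1) * (b * b ^ (q^(2*k+1)) * a ^ (q^(2*k)))
        = L (2*k) * N (2*k+1) * b ^ (q^(2*k)) := by
      rw [hLo k, div_mul_eq_mul_div, div_eq_iff
        (mul_ne_zero (mul_ne_zero hb (pow_ne_zero _ hb)) (pow_ne_zero _ ha))]
      linear_combination (-(L (2*k) * N (2*k+1) * b * a ^ (q^(2*k)))) * hY1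
    have M2 : L (2*k+2) * (a * b ^ (q^(2*k+2)) * a ^ (q^(2*k+1)))
        = L (2*k+1) * N (2*k+2) * b ^ (q^(2*k+1)) := by
      rw [hLe k, div_mul_eq_mul_div, div_eq_iff
        (mul_ne_zero (mul_ne_zero ha (pow_ne_zero _ hb)) (pow_ne_zero _ ha))]
      linear_combination (-(L (2*k+1) * N (2*k+2) * a * a ^ (q^(2*k+1)))) * hY2
    have M3 : L (2*k+3) * (b * b ^ (q^(2*k+3)) * a ^ (q^(2*k+2)))
        = L (2*k+2) * N (2*k+3) * b ^ (q^(2*k+2)) := by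
      have e3 := hLo (k+1)
      rw [show 2*(k+1)+1 = 2*k+3 by ring, show 2*(k+1) = 2*k+2 by ring] at e3
      rw [e3, div_mul_eq_mul_div, div_eq_iff
        (mul_ne_zero (mul_ne_zero hb (pow_ne_zero _ hb)) (pow_ne_zero _ ha))]
      linear_combination (-(L (2*k+2) * N (2*k+3) * b * a ^ (q^(2*k+2)))) * hY3
    have M1q : (L (2*k+1) * (b * b ^ (q^(2*k+1)) * a ^ (q^(2*k))))^q
        = (L (2*k) * N (2*k+1) * b ^ (q^(2*k)))^q := by rw [M1]
    have M2q : (L (2*k+2) * (a * b ^ (q^(2*k+2)) * a ^ (q^(2*k+1))))^q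
        = (L (2*k+1) * N (2*k+2) * b ^ (q^(2*k+1)))^q := by rw [M2]
    have hW : (b * b ^ (q^(2*k+3)) * a ^ (q^(2*k+2)))
        * (a * b ^ (q^(2*k+2)) * a ^ (q^(2*k+1)))^(q+1)
        * (b * b ^ (q^(2*k+1)) * a ^ (q^(2*k)))^q ≠ 0 := by
      apply mul_ne_zero (mul_ne_zero _ _) <;>
        first
          | exact pow_ne_zero _ (mul_ne_zero (mul_ne_zero hb (pow_ne_zero _ hb)) (pow_ne_zero _ ha))
          | exact pow_ne_zero _ (mul_ne_zero (mul_ne_zero ha (pow_ne_zero _ hb)) (pow_ne_zero _ ha))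
          | exact mul_ne_zero (mul_ne_zero hb (pow_ne_zero _ hb)) (pow_ne_zero _ ha)
    have T : L (2*k+3) * L (2*k)^q * N (2*k+1)^q * N (2*k+2)^q * (a*b)
        = L (2*k+2)^q * L (2*k+1) * N (2*k+2) * N (2*k+3) * (a^q*b^q) := by
      apply mul_right_cancel₀ hW
      linear_combination
        (L (2*k)^q * N (2*k+1)^q * N (2*k+2)^q * a * b
          * (a * b ^ (q^(2*k+2)) * a ^ (q^(2*k+1)))^(q+1)
          * (b * b ^ (q^(2*k+1)) * a ^ (q^(2*k)))^q) * M3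
        + ((N (2*k+3) * b ^ (q^(2*k+2))) * L (2*k)^q * N (2*k+1)^q * N (2*k+2)^q * a * b
          * (a * b ^ (q^(2*k+2)) * a ^ (q^(2*k+1)))^q
          * (b * b ^ (q^(2*k+1)) * a ^ (q^(2*k)))^q) * M2
        - (L (2*k+1) * N (2*k+2) * N (2*k+3) * a^q * b^q
          * (b * b ^ (q^(2*k+3)) * a ^ (q^(2*k+2)))
          * (a * b ^ (q^(2*k+2)) * a ^ (q^(2*k+1)))
          * (b * b ^ (q^(2*k+1)) * a ^ (q^(2*k)))^q) * M2q
        - ((N (2*k+2) * b ^ (q^(2*k+1)))^q * L (2*k+1) * N (2*k+2) * N (2*k+3) * a^q * b^q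
          * (b * b ^ (q^(2*k+3)) * a ^ (q^(2*k+2)))
          * (a * b ^ (q^(2*k+2)) * a ^ (q^(2*k+1)))) * M1q
    have hL0ne : L (2*k) ≠ 0 := (hLne k).1
    have hL2ne : L (2*k+2) ≠ 0 := by
      have := (hLne (k+1)).1; rwa [show 2*(k+1) = 2*k+2 by ring] at this
    have h1 : N (2*k+1) ≠ 0 := hNne _ (by omega)
    have h2 : N (2*k+2) ≠ 0 := hNne _ (by omega)
    have h3 : N (2*k+3) ≠ 0 := hNne _ (by omega)
    have hfrac : (N (2*k+1)^q)⁻¹ * (N (2*k+2) * (N (2*k+2)^q)⁻¹) * N (2*k+3) * ((a*b)^q * (a*b)⁻¹)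
        = (N (2*k+2) * N (2*k+3) * (a*b)^q) / (N (2*k+1)^q * (N (2*k+2)^q * (a*b))) := by
      rw [div_eq_mul_inv, mul_inv, mul_inv]
      ring
    rw [hfrac, div_mul_div_comm, div_eq_div_iff (pow_ne_zero q hL2ne)
      (mul_ne_zero (pow_ne_zero q hL0ne) (mul_ne_zero (pow_ne_zero q h1)
        (mul_ne_zero (pow_ne_zero q h2) (mul_ne_zero ha hb))))]
    linear_combination T
  -- the S-identity
  have hS : ∀ k, (N (2*k+3)^q)⁻¹ * (N (2*k+4) * (N (2*k+4)^q)⁻¹) * N (2*k+5) * ((a*b)^q * (a*b)⁻¹)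
      = (a * A ^ q ^ (2*k+2) / N (2*k+4))^q * (a * A ^ q ^ (2*k+2) / N (2*k+4))⁻¹
        * (b * A ^ q ^ (2*k+1) / N (2*k+3))^q * (b * A ^ q ^ (2*k+3) / N (2*k+5))⁻¹ := by
    intro k
    have h3 : N (2*k+3) ≠ 0 := hNne _ (by omega)
    have h4 : N (2*k+4) ≠ 0 := hNne _ (by omega)
    have h5 : N (2*k+5) ≠ 0 := hNne _ (by omega)
    have lhs_eq : (N (2*k+3)^q)⁻¹ * (N (2*k+4) * (N (2*k+4)^q)⁻¹) * N (2*k+5) * ((a*b)^q * (a*b)⁻¹)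
        = (N (2*k+4) * N (2*k+5) * (a*b)^q) / (N (2*k+3)^q * (N (2*k+4)^q * (a*b))) := by
      rw [div_eq_mul_inv, mul_inv, mul_inv]
      ring
    have rhs_eq : (a * A ^ q ^ (2*k+2) / N (2*k+4))^q * (a * A ^ q ^ (2*k+2) / N (2*k+4))⁻¹
        * (b * A ^ q ^ (2*k+1) / N (2*k+3))^q * (b * A ^ q ^ (2*k+3) / N (2*k+5))⁻¹
        = ((a * A ^ q ^ (2*k+2))^q * N (2*k+4) * (b * A ^ q ^ (2*k+1))^q * N (2*k+5))
          / (N (2*k+4)^q * (a * A ^ q ^ (2*k+2)) * N (2*k+3)^q * (b * A ^ q ^ (2*k+3))) := by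
      rw [div_pow, div_pow, inv_div, inv_div, div_mul_div_comm, div_mul_div_comm, div_mul_div_comm]
    rw [lhs_eq, rhs_eq, div_eq_div_iff
      (mul_ne_zero (pow_ne_zero _ h3) (mul_ne_zero (pow_ne_zero _ h4) (mul_ne_zero ha hb)))
      (mul_ne_zero (mul_ne_zero (mul_ne_zero (pow_ne_zero _ h4)
        (mul_ne_zero ha (pow_ne_zero _ hA))) (pow_ne_zero _ h3))
        (mul_ne_zero hb (pow_ne_zero _ hA)))]
    ring
  -- the main induction
  have main : ∀ e : ℕ, L (2*(e+1)+1) / L (2*(e+1))^q =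
      br 1 ^ ((1:ℤ) - (q:ℤ)) * br 2 * (a/b)^(q-1) *
      (∏ j ∈ Finset.Icc 2 (e+1), (1 - br (2*(j-1))/br (2*j)))^(q-1) *
      (∏ j ∈ Finset.Icc 1 ((e+1)-1), (1 - br (2*j-1)/br (2*j+1)))^q *
      (∏ j ∈ Finset.Icc 1 (e+1), (1 - br (2*j-1)/br (2*j+1)))⁻¹ := by
    intro e
    induction e with
    | zero =>
      -- base case d = 1
      have key := hstep 0
      rw [show 2*0+3 = 2*(0+1)+1 by ring, show 2*0+2 = 2*(0+1) by ring,
        show 2*0+1 = 1 by ring, show 2*0 = 0 by ring] at key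
      rw [key, hL0, one_pow, div_one]
      rw [Finset.Icc_eq_empty (by omega : ¬(2:ℕ) ≤ 0+1), Finset.prod_empty, one_pow]
      rw [show (0+1)-1 = 0 by omega, Finset.Icc_eq_empty (by omega : ¬(1:ℕ) ≤ 0),
        Finset.prod_empty, one_pow]
      rw [show (0:ℕ)+1 = 1 from rfl, Finset.Icc_self, Finset.prod_singleton]
      have hb13 : (1:K) - br (2*1-1) / br (2*1+1) = b * A ^ q ^ 1 / N 3 := by
        have := hbeta 0
        rw [show 2*0+1 = 1 by ring, show 2*0+3 = 3 by ring] at this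
        rw [show 2*1-1 = 1 by omega, show 2*1+1 = 3 by ring]
        exact this
      have hbr1 : br 1 = N 1 / (a ^ q ^ 1 * b) := by
        have := hbro 0; rwa [show 2*0+1 = 1 by ring] at this
      have hbr2 : br 2 = N 2 / (a ^ q ^ 2 * a) := by
        have := hbre 1; rwa [show 2*1 = 2 by ring] at this
      have hl1m : L 1 * (b * b ^ q ^ 1 * a ^ q ^ 0) = N 1 * b ^ q ^ 0 := by
        have e := hLo 0
        rw [show 2*0+1 = 1 by ring, show 2*0 = 0 by ring, hL0, one_mul] at e
        rw [e, div_mul_eq_mul_div, div_eq_iff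
          (mul_ne_zero (mul_ne_zero hb (pow_ne_zero _ hb)) (pow_ne_zero _ ha))]
        have hY : b ^ (q^1 - q^0) * b ^ (q^0) = b ^ (q^1) :=
          pow_sub_mul_pow b (hple _ _ (by omega))
        linear_combination (-(N 1 * b * a ^ (q^0))) * hY
      have hl1 : L 1 = (N 1 * b ^ q ^ 0) / (b * b ^ q ^ 1 * a ^ q ^ 0) :=
        eq_div_of_mul_eq (mul_ne_zero (mul_ne_zero hb (pow_ne_zero _ hb)) (pow_ne_zero _ ha)) hl1m
      have hbr1ne : br 1 ≠ 0 := by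
        have := hbrOdd 0; rwa [show 2*0+1 = 1 by ring] at this
      have h1 : N 1 ≠ 0 := hNne _ (by omega)
      have h2 : N 2 ≠ 0 := hNne _ (by omega)
      have h3 : N 3 ≠ 0 := hNne _ (by omega)
      rw [zpow_sub₀ hbr1ne, zpow_one, zpow_natCast]
      rw [pow_sub₀ _ (div_ne_zero ha hb) (by omega : 1 ≤ q), pow_one]
      rw [show (2*1+1 : ℕ) = 3 from rfl, show (2*1 : ℕ) = 2 from rfl]
      rw [hb13, hbr1, hbr2, hl1, hNA]
      rw [mul_one, mul_one]
      have hANe : a * A ≠ 0 := mul_ne_zero ha hA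
      have hfrac2 : (N 1 ^ q)⁻¹ * ((a*A) * ((a*A) ^ q)⁻¹) * N 3 * ((a*b)^q * (a*b)⁻¹)
          = ((a*A) * N 3 * (a*b)^q) / (N 1 ^ q * ((a*A) ^ q * (a*b))) := by
        rw [div_eq_mul_inv, mul_inv, mul_inv]; ring
      rw [hfrac2, div_mul_div_comm]
      rw [base_rhs q (N 1) (a ^ q ^ 1 * b) (a*A) (a ^ q ^ 2 * a) a b (b * A ^ q ^ 1) (N 3)
        h1 (mul_ne_zero (pow_ne_zero _ ha) hb) (mul_ne_zero (pow_ne_zero _ ha) ha) ha hb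
        (mul_ne_zero hb (pow_ne_zero _ hA)) h3]
      rw [div_eq_div_iff
        (mul_ne_zero (mul_ne_zero (mul_ne_zero hb (pow_ne_zero _ hb)) (pow_ne_zero _ ha))
          (mul_ne_zero (pow_ne_zero _ h1) (mul_ne_zero (pow_ne_zero _ hANe) (mul_ne_zero ha hb))))
        (mul_ne_zero (mul_ne_zero (mul_ne_zero (mul_ne_zero (mul_ne_zero
          (mul_ne_zero (pow_ne_zero _ ha) hb) (pow_ne_zero _ h1))
          (mul_ne_zero (pow_ne_zero _ ha) ha)) (pow_ne_zero _ hb)) ha)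
          (mul_ne_zero hb (pow_ne_zero _ hA)))]
      ring
    | succ e ih =>
      have key := hstep (e+1)
      rw [show 2*(e+1)+3 = 2*(e+1+1)+1 by ring, show 2*(e+1)+2 = 2*(e+1+1) by ring] at key
      rw [key, ih]
      rw [show e+1+1-1 = e+1 from by omega]
      have s1 : (∏ j ∈ Finset.Icc 2 (e+1+1), (1 - br (2*(j-1))/br (2*j)))
          = (∏ j ∈ Finset.Icc 2 (e+1), (1 - br (2*(j-1))/br (2*j)))
            * (1 - br (2*((e+1+1)-1))/br (2*(e+1+1))) :=
        Finset.prod_Icc_succ_top (by omega) _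
      have s2 : (∏ j ∈ Finset.Icc 1 (e+1+1), (1 - br (2*j-1)/br (2*j+1)))
          = (∏ j ∈ Finset.Icc 1 (e+1), (1 - br (2*j-1)/br (2*j+1)))
            * (1 - br (2*(e+1+1)-1)/br (2*(e+1+1)+1)) :=
        Finset.prod_Icc_succ_top (by omega) _
      have s3 : (∏ j ∈ Finset.Icc 1 (e+1), (1 - br (2*j-1)/br (2*j+1)))
          = (∏ j ∈ Finset.Icc 1 e, (1 - br (2*j-1)/br (2*j+1)))
            * (1 - br (2*(e+1)-1)/br (2*(e+1)+1)) :=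
        Finset.prod_Icc_succ_top (by omega) _
      rw [s1, s2, s3]
      simp only [show 2*((e+1+1)-1) = 2*e+2 from by omega, show 2*(e+1+1) = 2*e+4 from by omega,
        show 2*(e+1+1)-1 = 2*e+3 from by omega, show 2*(e+1+1)+1 = 2*e+5 from by omega,
        show (e+1+1)-1 = e+1 from by omega, show 2*(e+1)-1 = 2*e+1 from by omega,
        show 2*(e+1)+1 = 2*e+3 from by omega, show 2*(e+1) = 2*e+2 from by omega,
        show (e+1)-1 = e from by omega, show 2*(e+1)+2 = 2*e+4 from by omega,
        show 2*(e+1)+3 = 2*e+5 from by omega, show 2*e+4-1 = 2*e+3 from by omega,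
        show 2*e+4+1 = 2*e+5 from by omega, show 2*e+2-1 = 2*e+1 from by omega,
        show 2*e+2+1 = 2*e+3 from by omega, show 2*e+2+2 = 2*e+4 from by omega,
        show 2*e+2+3 = 2*e+5 from by omega]
      rw [hS e]
      have hα := halpha (e+1)
      rw [show 2*(e+1) = 2*e+2 from by omega, show 2*e+2+2 = 2*e+4 from by omega] at hα
      have hβ1 := hbeta e
      have hβ2 := hbeta (e+1)
      rw [show 2*(e+1)+1 = 2*e+3 from by omega, show 2*(e+1)+3 = 2*e+5 from by omega] at hβ2
      rw [hα, hβ1, hβ2]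
      have hFα : a * A ^ q ^ (2*e+2) / N (2*e+4) ≠ 0 :=
        div_ne_zero (mul_ne_zero ha (pow_ne_zero _ hA)) (hNne _ (by omega))
      rw [mul_pow]
      rw [pow_sub₀ (a * A ^ q ^ (2*e+2) / N (2*e+4)) hFα (by omega : 1 ≤ q), pow_one]
      ring
  obtain ⟨e, rfl⟩ : ∃ e, d = e+1 := ⟨d-1, by omega⟩
  exact main e

/-- The key identity `L_{2d+1}/L_{2d}^q = [1]^{1−q}·[2]·T^{(q−1)(σ−1)}·α_d^{q−1}·β_{d−1}^q·β_d⁻¹`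
used in the computation of the Carlitz period `ξ_𝒜` (Theorem 3.13). -/
theorem stmt12 {F : Type*} [Field F] [Fintype F]
    (q : ℕ) (hq : Fintype.card F = q ^ 2) (ζ : F) (hζ : ζ ^ q ≠ ζ) (d : ℕ) (hd : 1 ≤ d)
    (Lf : ℕ → RatFunc F) (hL0 : Lf 0 = 1)
    (hL : ∀ j : ℕ, Lf (j + 1) = Lf j * (RatFunc.X - RatFunc.X ^ q ^ (j + 1)) /
      ((RatFunc.X - RatFunc.C (ζ ^ q ^ (j + 2))) *
        (RatFunc.X - RatFunc.C ζ) ^ (q ^ (j + 1) - q ^ j) *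
        (RatFunc.X - RatFunc.C ζ ^ q) ^ q ^ j)) :
    let T : RatFunc F := (RatFunc.X - RatFunc.C ζ ^ q)⁻¹
    let Tσ : RatFunc F := (RatFunc.X - RatFunc.C ζ)⁻¹
    let br : ℕ → RatFunc F := fun k => T ^ q ^ k - if k % 2 = 0 then T else Tσ
    let α : RatFunc F := ∏ j ∈ Finset.Icc 2 d, (1 - br (2 * (j - 1)) / br (2 * j))
    let βd : RatFunc F := ∏ j ∈ Finset.Icc 1 d, (1 - br (2 * j - 1) / br (2 * j + 1))
    let βdm : RatFunc F := ∏ j ∈ Finset.Icc 1 (d - 1), (1 - br (2 * j - 1) / br (2 * j + 1))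
    Lf (2 * d + 1) / Lf (2 * d) ^ q =
      br 1 ^ ((1 : ℤ) - (q : ℤ)) * br 2 *
        ((RatFunc.X - RatFunc.C ζ ^ q) / (RatFunc.X - RatFunc.C ζ)) ^ (q - 1) *
        α ^ (q - 1) * βdm ^ q * βd⁻¹ := by
  intro T Tσ br α βd βdm
  have hq2 : 2 ≤ q := by
    have h1 : 1 < Fintype.card F := Fintype.one_lt_card
    rw [hq] at h1
    by_contra h
    push_neg at h
    interval_cases q <;> simp at h1
  obtain ⟨p, hCp⟩ := CharP.exists F
  haveI := hCp
  obtain ⟨n, hp_prime, hcard⟩ := FiniteField.card F p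
  haveI : Fact p.Prime := ⟨hp_prime⟩
  have hqdvd : q ∣ p ^ (n : ℕ) := by
    rw [← hcard, hq]
    exact dvd_pow_self q two_ne_zero
  obtain ⟨m, hmn, hqm⟩ := (Nat.dvd_prime_pow hp_prime).mp hqdvd
  haveI : CharP (RatFunc F) p :=
    charP_of_injective_algebraMap (algebraMap F (RatFunc F)).injective p
  have frob : ∀ (x y : RatFunc F) (k : ℕ), (x - y) ^ q ^ k = x ^ q ^ k - y ^ q ^ k := by
    intro x y k
    have hqk : q ^ k = p ^ (m * k) := by rw [hqm, pow_mul]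
    rw [hqk]
    exact sub_pow_char_pow x y (m * k)
  have hζ2 : ζ ^ q ^ 2 = ζ := by rw [← hq]; exact FiniteField.pow_card ζ
  have hζstep : ∀ k, ζ ^ q ^ (k + 2) = ζ ^ q ^ k := by
    intro k
    rw [show q ^ (k + 2) = q ^ 2 * q ^ k by ring, pow_mul, hζ2]
  have hζe : ∀ k, ζ ^ q ^ (2 * k) = ζ := by
    intro k
    induction k with
    | zero => simp
    | succ k ih => rw [show 2 * (k + 1) = 2 * k + 2 by ring, hζstep, ih]
  have hζo : ∀ k, ζ ^ q ^ (2 * k + 1) = ζ ^ q := by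
    intro k
    induction k with
    | zero => simp
    | succ k ih => rw [show 2 * (k + 1) + 1 = 2 * k + 1 + 2 by ring, hζstep, ih]
  have hCpow : (RatFunc.C ζ : RatFunc F) ^ q = RatFunc.C (ζ ^ q) := (map_pow _ _ _).symm
  have hXC : ∀ c : F, (RatFunc.X - RatFunc.C c : RatFunc F) ≠ 0 := by
    intro c
    have h : (RatFunc.X - RatFunc.C c : RatFunc F)
        = algebraMap (Polynomial F) (RatFunc F) (Polynomial.X - Polynomial.C c) := by
      rw [map_sub, RatFunc.algebraMap_X, RatFunc.algebraMap_C]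
    rw [h]
    exact RatFunc.algebraMap_ne_zero (Polynomial.X_sub_C_ne_zero c)
  have ha : (RatFunc.X - RatFunc.C ζ ^ q : RatFunc F) ≠ 0 := by
    rw [hCpow]; exact hXC _
  have hb : (RatFunc.X - RatFunc.C ζ : RatFunc F) ≠ 0 := hXC ζ
  have hN : ∀ k : ℕ, (RatFunc.X - RatFunc.X ^ q ^ (k + 1) : RatFunc F) ≠ 0 := by
    intro k
    have hpoly : (Polynomial.X - Polynomial.X ^ q ^ (k + 1) : Polynomial F) ≠ 0 := by
      intro h0
      have hc := congrArg (fun P => Polynomial.coeff P 1) h0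
      have hne : q ^ (k + 1) ≠ 1 := by
        have : q ≤ q ^ (k + 1) := Nat.le_self_pow (by omega) q
        omega
      simp only [Polynomial.coeff_sub, Polynomial.coeff_X_one, Polynomial.coeff_X_pow,
        Polynomial.coeff_zero, if_neg (by omega : ¬ (1 = q ^ (k + 1)))] at hc
      norm_num at hc
    have h : (RatFunc.X - RatFunc.X ^ q ^ (k + 1) : RatFunc F)
        = algebraMap (Polynomial F) (RatFunc F) (Polynomial.X - Polynomial.X ^ q ^ (k + 1)) := by
      rw [map_sub, map_pow, RatFunc.algebraMap_X]
    rw [h]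
    exact RatFunc.algebraMap_ne_zero hpoly
  have hapow : ∀ k, (RatFunc.X - RatFunc.C ζ ^ q : RatFunc F) ^ q ^ k
      = RatFunc.X ^ q ^ k - RatFunc.C (ζ ^ q ^ (k + 1)) := by
    intro k
    rw [hCpow, frob, ← map_pow, ← pow_mul, show q * q ^ k = q ^ (k + 1) by ring]
  have hNa : ∀ k, (RatFunc.X - RatFunc.X ^ q ^ (2 * k) : RatFunc F)
      = (RatFunc.X - RatFunc.C ζ ^ q) - (RatFunc.X - RatFunc.C ζ ^ q) ^ q ^ (2 * k) := by
    intro k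
    rw [hapow (2 * k), show 2 * k + 1 = 2 * k + 1 from rfl, hζo k, hCpow]
    ring
  have hNb : ∀ k, (RatFunc.X - RatFunc.X ^ q ^ (2 * k + 1) : RatFunc F)
      = (RatFunc.X - RatFunc.C ζ) - (RatFunc.X - RatFunc.C ζ ^ q) ^ q ^ (2 * k + 1) := by
    intro k
    have h1 : ζ ^ q ^ (2 * k + 1 + 1) = ζ := by
      have := hζe (k + 1); rwa [show 2 * (k + 1) = 2 * k + 1 + 1 by ring] at this
    rw [hapow (2 * k + 1), h1]
    ring
  have hNgen : ∀ k : ℕ, k ≠ 0 → (RatFunc.X - RatFunc.X ^ q ^ k : RatFunc F) ≠ 0 := by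
    intro k hk
    obtain ⟨l, rfl⟩ := Nat.exists_eq_succ_of_ne_zero hk
    exact hN l
  have hN2 : (RatFunc.X - RatFunc.X ^ q ^ 2 : RatFunc F) ≠ 0 := hNgen 2 (by omega)
  have hA : (RatFunc.X - RatFunc.X ^ q ^ 2 : RatFunc F) / (RatFunc.X - RatFunc.C ζ ^ q) ≠ 0 :=
    div_ne_zero hN2 ha
  have hNA : (RatFunc.X - RatFunc.X ^ q ^ 2 : RatFunc F)
      = (RatFunc.X - RatFunc.C ζ ^ q) *
        ((RatFunc.X - RatFunc.X ^ q ^ 2) / (RatFunc.X - RatFunc.C ζ ^ q)) := by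
    field_simp
  have hfrob : ∀ k, (RatFunc.X - RatFunc.C ζ ^ q : RatFunc F) ^ q ^ k
        - (RatFunc.X - RatFunc.C ζ ^ q) ^ q ^ (k + 2)
      = ((RatFunc.X - RatFunc.C ζ ^ q) *
        ((RatFunc.X - RatFunc.X ^ q ^ 2) / (RatFunc.X - RatFunc.C ζ ^ q))) ^ q ^ k := by
    intro k
    rw [← hNA]
    have h2 : (RatFunc.X - RatFunc.X ^ q ^ 2 : RatFunc F)
        = (RatFunc.X - RatFunc.C ζ ^ q) - (RatFunc.X - RatFunc.C ζ ^ q) ^ q ^ 2 := by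
      have := hNa 1; rwa [show 2 * 1 = 2 from rfl] at this
    have hsplit : (RatFunc.X - RatFunc.C ζ ^ q : RatFunc F) ^ q ^ (k + 2)
        = ((RatFunc.X - RatFunc.C ζ ^ q) ^ q ^ 2) ^ q ^ k := by
      rw [← pow_mul]
      congr 1
      ring
    rw [h2, hsplit, ← frob]
  have hbre : ∀ k, br (2 * k) = (RatFunc.X - RatFunc.X ^ q ^ (2 * k)) /
      ((RatFunc.X - RatFunc.C ζ ^ q) ^ q ^ (2 * k) * (RatFunc.X - RatFunc.C ζ ^ q)) := by
    intro k
    show T ^ q ^ (2 * k) - (if (2 * k) % 2 = 0 then T else Tσ) = _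
    rw [if_pos (by omega)]
    show ((RatFunc.X - RatFunc.C ζ ^ q)⁻¹) ^ q ^ (2 * k) - (RatFunc.X - RatFunc.C ζ ^ q)⁻¹ = _
    rw [inv_pow, inv_sub_inv (pow_ne_zero _ ha) ha, ← hNa k]
  have hbro : ∀ k, br (2 * k + 1) = (RatFunc.X - RatFunc.X ^ q ^ (2 * k + 1)) /
      ((RatFunc.X - RatFunc.C ζ ^ q) ^ q ^ (2 * k + 1) * (RatFunc.X - RatFunc.C ζ)) := by
    intro k
    show T ^ q ^ (2 * k + 1) - (if (2 * k + 1) % 2 = 0 then T else Tσ) = _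
    rw [if_neg (by omega)]
    show ((RatFunc.X - RatFunc.C ζ ^ q)⁻¹) ^ q ^ (2 * k + 1) - (RatFunc.X - RatFunc.C ζ)⁻¹ = _
    rw [inv_pow, inv_sub_inv (pow_ne_zero _ ha) hb, ← hNb k]
  have hLo : ∀ k, Lf (2 * k + 1) = Lf (2 * k) * (RatFunc.X - RatFunc.X ^ q ^ (2 * k + 1)) /
      ((RatFunc.X - RatFunc.C ζ) * (RatFunc.X - RatFunc.C ζ) ^ (q ^ (2 * k + 1) - q ^ (2 * k)) *
        (RatFunc.X - RatFunc.C ζ ^ q) ^ q ^ (2 * k)) := by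
    intro k
    have h := hL (2 * k)
    have h1 : ζ ^ q ^ (2 * k + 2) = ζ := by
      have := hζe (k + 1); rwa [show 2 * (k + 1) = 2 * k + 2 by ring] at this
    rwa [h1] at h
  have hLe : ∀ k, Lf (2 * k + 2) = Lf (2 * k + 1) * (RatFunc.X - RatFunc.X ^ q ^ (2 * k + 2)) /
      ((RatFunc.X - RatFunc.C ζ ^ q) *
        (RatFunc.X - RatFunc.C ζ) ^ (q ^ (2 * k + 2) - q ^ (2 * k + 1)) *
        (RatFunc.X - RatFunc.C ζ ^ q) ^ q ^ (2 * k + 1)) := by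
    intro k
    have h := hL (2 * k + 1)
    have h1 : ζ ^ q ^ (2 * k + 1 + 2) = ζ ^ q := by
      have := hζo (k + 1); rwa [show 2 * (k + 1) + 1 = 2 * k + 1 + 2 by ring] at this
    rw [h1, ← hCpow] at h
    rwa [show 2 * k + 1 + 1 = 2 * k + 2 from rfl] at h
  exact abstract_key q hq2 (RatFunc.X - RatFunc.C ζ ^ q) (RatFunc.X - RatFunc.C ζ)
    ((RatFunc.X - RatFunc.X ^ q ^ 2) / (RatFunc.X - RatFunc.C ζ ^ q))
    (fun k => RatFunc.X - RatFunc.X ^ q ^ k) Lf br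
    ha hb hA hN hNA hfrob hNa hNb hbre hbro hL0 hLo hLe d hd
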